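/- Let G be a connected bipartite simple graph with at least one vertex, and let P_4 be the path with four vertices (and three edges). Then the number of homomorphisms from G to P_4 equals twice the number of independent sets of G. -/
import Mathlib


/-!
STATEMENT 1: For a connected bipartite simple graph `G` (with at least one vertex,
which is implied by connectivity), the number of homomorphisms from `G` to the
path `P₄` equals twice the number of independent sets of `G`.
-/

open scoped Classical

namespace Stmt1Aux

/-- parity of an element of `Fin 4` -/
def par (x : Fin 4) : Fin 2 := ⟨x.val % 2, Nat.mod_lt _ (by norm_num)⟩

/-- encode a parity and a membership proposition into an element of `Fin 4`. -/
noncomputable def enc (p : Fin 2) (P : Prop) : Fin 4 :=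
  if P then (if p = 0 then 0 else 3) else (if p = 0 then 2 else 1)

lemma par_enc (p : Fin 2) (P : Prop) : par (enc p P) = p := by
  by_cases h : P <;> fin_cases p <;> simp [enc, h, par] <;> rfl

lemma enc_mem (p : Fin 2) (P : Prop) : (enc p P = 0 ∨ enc p P = 3) ↔ P := by
  by_cases h : P <;> fin_cases p <;> simp [enc, h] <;> decide

lemma enc_par (x : Fin 4) : enc (par x) (x = 0 ∨ x = 3) = x := by
  fin_cases x <;> simp [enc, par] <;> decide

lemma enc_adj (p q : Fin 2) (hpq : p ≠ q) (Pa Pb : Prop) (h : ¬ (Pa ∧ Pb)) :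
    (SimpleGraph.pathGraph 4).Adj (enc p Pa) (enc q Pb) := by
  rw [SimpleGraph.pathGraph_adj]
  by_cases ha : Pa <;> by_cases hb : Pb <;>
    fin_cases p <;> fin_cases q <;> simp_all [enc] <;> decide

lemma adj_not_mem {x y : Fin 4} (h : (SimpleGraph.pathGraph 4).Adj x y)
    (hx : x = 0 ∨ x = 3) (hy : y = 0 ∨ y = 3) : False := by
  rw [SimpleGraph.pathGraph_adj] at h
  rcases hx with hx | hx <;> rcases hy with hy | hy <;> subst hx <;> subst hy <;>
    revert h <;> decide

lemma par_adj {x y : Fin 4} (h : (SimpleGraph.pathGraph 4).Adj x y) : par x ≠ par y := by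
  rw [SimpleGraph.pathGraph_adj] at h
  fin_cases x <;> fin_cases y <;> simp_all [par] <;> omega

lemma fin2_eq {x y z w : Fin 2} (h1 : x ≠ y) (h2 : z ≠ w) (h : x = z) : y = w := by
  revert h1 h2 h; revert x y z w; decide

/-- Two proper 2-colorings agreeing at one endpoint of a walk agree at the other. -/
lemma col_unique {α : Type*} {G : SimpleGraph α} (c1 c2 : α → Fin 2)
    (h1 : ∀ a b, G.Adj a b → c1 a ≠ c1 b)
    (h2 : ∀ a b, G.Adj a b → c2 a ≠ c2 b) :
    ∀ {u v : α}, G.Walk u v → c1 u = c2 u → c1 v = c2 v := by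
  intro u v w
  induction w with
  | nil => exact id
  | cons h p ih =>
    intro huv
    exact ih (fin2_eq (h1 _ _ h) (h2 _ _ h) huv)

end Stmt1Aux

open Stmt1Aux in
open scoped Classical in
theorem stmt1 {α : Type*} [Fintype α] (G : SimpleGraph α)
    (hconn : G.Connected) (hbip : G.Colorable 2) :
    Fintype.card {σ : α → Fin 4 //
        ∀ a b : α, G.Adj a b → (SimpleGraph.pathGraph 4).Adj (σ a) (σ b)}
      = 2 * Fintype.card {s : Set α // ∀ a ∈ s, ∀ b ∈ s, ¬ G.Adj a b} := by
  have hne : Nonempty α := hconn.nonempty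
  obtain ⟨v₀⟩ := hne
  obtain ⟨c₀⟩ := hbip
  -- normalized coloring
  set d : α → Fin 2 := fun v => c₀ v - c₀ v₀ with hd
  have hdprop : ∀ a b, G.Adj a b → d a ≠ d b := by
    intro a b hab he
    exact c₀.valid hab (by simpa [hd, sub_left_inj] using he)
  have hdv₀ : d v₀ = 0 := by simp [hd]
  -- key: parity of any homomorphism is a proper coloring determined by its value at v₀
  have key : ∀ (σ : α → Fin 4),
      (∀ a b : α, G.Adj a b → (SimpleGraph.pathGraph 4).Adj (σ a) (σ b)) →
      ∀ v, par (σ v) = d v + par (σ v₀) := by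
    intro σ hσ v
    obtain ⟨w⟩ := hconn.preconnected v₀ v
    refine col_unique (fun v => par (σ v)) (fun v => d v + par (σ v₀)) ?_ ?_ w ?_
    · intro a b hab
      exact par_adj (hσ a b hab)
    · intro a b hab he
      exact hdprop a b hab (by simpa using add_right_cancel he)
    · simp [hdv₀]
  let e : {σ : α → Fin 4 //
        ∀ a b : α, G.Adj a b → (SimpleGraph.pathGraph 4).Adj (σ a) (σ b)} ≃
      (Fin 2) × {s : Set α // ∀ a ∈ s, ∀ b ∈ s, ¬ G.Adj a b} :=
    { toFun := fun σ => ⟨par (σ.1 v₀),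
        ⟨{v | σ.1 v = 0 ∨ σ.1 v = 3}, by
          intro a ha b hb hab
          exact adj_not_mem (σ.2 a b hab) ha hb⟩⟩
      invFun := fun x => ⟨fun v => enc (d v + x.1) (v ∈ x.2.1), by
        intro a b hab
        refine enc_adj _ _ (fun he => hdprop a b hab (add_right_cancel he)) _ _ ?_
        rintro ⟨ha, hb⟩
        exact x.2.2 a ha b hb hab⟩
      left_inv := by
        rintro ⟨σ, hσ⟩
        ext v
        simp only
        rw [← key σ hσ v]
        exact congrArg Fin.val (enc_par (σ v))
      right_inv := by
        rintro ⟨ε, S, hS⟩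
        refine Prod.ext ?_ ?_
        · simp only
          rw [hdv₀, zero_add, par_enc]
        · apply Subtype.ext
          ext v
          simp only [Set.mem_setOf_eq]
          exact enc_mem (d v + ε) (v ∈ S) }
  rw [Fintype.card_congr e, Fintype.card_prod, Fintype.card_fin]
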